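/- For all n ≥ 0 and k ≥ 1, the k-colored Motzkin number satisfies m_{n,k} = Σ_{j=0}^{⌊n/2⌋} C_j · binomial(n, 2j) · k^{n−2j}, where C_j is the j-th Catalan number. -/

import Mathlib

open Finset

/-- The `k`-colored Motzkin numbers. -/
def coloredMotzkin (k : ℕ) : ℕ → ℕ
  | 0 => 1
  | n + 1 => k * coloredMotzkin k n + ∑ i : Fin n, coloredMotzkin k i * coloredMotzkin k (n - 1 - i)
decreasing_by
  · exact Nat.lt_succ_self n
  · exact Nat.lt_succ_of_lt i.is_lt
  · have := i.is_lt; omega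

def F (k n : ℕ) : ℕ := ∑ j ∈ Finset.range (n+1), catalan j * n.choose (2*j) * k^(n-2*j)

lemma choose_conv (s : ℕ) : ∀ (N r : ℕ), ∑ i ∈ Finset.range (N+1), i.choose r * (N-i).choose s = (N+1).choose (r+s+1) := by
  intro N
  induction N with
  | zero =>
    intro r
    cases r with
    | zero => cases s <;> simp [Nat.choose]
    | succ r' =>
      simp [Nat.choose_eq_zero_of_lt (by omega : 1 < r' + 1 + s + 1)]
  | succ N ih =>
    intro r
    rw [Finset.sum_range_succ']
    cases r with
    | zero =>
      simp only [Nat.choose_zero_right, one_mul, Nat.succ_sub_succ]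
      have h0 := ih 0
      simp only [Nat.choose_zero_right, one_mul, Nat.zero_add] at h0 ⊢
      rw [h0]
      have h := Nat.choose_succ_succ (N+1) s
      simp only [Nat.sub_zero, Nat.succ_eq_add_one] at *
      omega
    | succ r' =>
      have : ∀ j ∈ Finset.range (N+1), (j+1).choose (r'+1) * ((N+1)-(j+1)).choose s
          = j.choose r' * (N-j).choose s + j.choose (r'+1) * (N-j).choose s := by
        intro j hj
        rw [Nat.choose_succ_succ, Nat.succ_sub_succ, add_mul]
      rw [Finset.sum_congr rfl this, Finset.sum_add_distrib, ih r', ih (r'+1)]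
      have h := Nat.choose_succ_succ (N+1) (r'+s+1)
      simp only [Nat.choose_zero_succ, Nat.zero_mul, Nat.add_zero, Nat.succ_eq_add_one,
        show r'+1+s+1 = r'+s+1+1 from by omega] at *
      omega

lemma square_catalan (N : ℕ) (g : ℕ → ℕ) (hg : ∀ m, N ≤ m → g m = 0) :
    ∑ a ∈ Finset.range N, ∑ b ∈ Finset.range N, catalan a * catalan b * g (a+b)
      = ∑ m ∈ Finset.range N, catalan (m+1) * g m := by
  have hmem : ∀ p : ℕ × ℕ, p ∈ (Finset.range N).biUnion Finset.HasAntidiagonal.antidiagonal ↔ p.1 + p.2 < N := by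
    intro p
    simp only [Finset.mem_biUnion, Finset.mem_range, Finset.HasAntidiagonal.mem_antidiagonal]
    constructor
    · rintro ⟨m, hm, rfl⟩; exact hm
    · intro h; exact ⟨p.1 + p.2, h, rfl⟩
  have hdisj : (↑(Finset.range N) : Set ℕ).PairwiseDisjoint Finset.HasAntidiagonal.antidiagonal := by
    intro m _ m' _ hne
    simp only [Finset.disjoint_left]
    intro p hp hp'
    rw [Finset.HasAntidiagonal.mem_antidiagonal] at hp hp'
    exact hne (hp ▸ hp')
  calc ∑ a ∈ Finset.range N, ∑ b ∈ Finset.range N, catalan a * catalan b * g (a+b)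
      = ∑ p ∈ Finset.range N ×ˢ Finset.range N, catalan p.1 * catalan p.2 * g (p.1+p.2) := by
        rw [Finset.sum_product]
    _ = ∑ p ∈ (Finset.range N).biUnion Finset.HasAntidiagonal.antidiagonal, catalan p.1 * catalan p.2 * g (p.1+p.2) := by
        refine (Finset.sum_subset ?_ ?_).symm
        · intro p hp
          rw [hmem] at hp
          simp only [Finset.mem_product, Finset.mem_range]
          omega
        · intro p _ hp
          rw [hmem] at hp
          rw [hg _ (by omega), mul_zero]
    _ = ∑ m ∈ Finset.range N, ∑ p ∈ Finset.HasAntidiagonal.antidiagonal m, catalan p.1 * catalan p.2 * g (p.1+p.2) := by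
        rw [Finset.sum_biUnion hdisj]
    _ = ∑ m ∈ Finset.range N, catalan (m+1) * g m := by
        refine Finset.sum_congr rfl fun m _ => ?_
        rw [catalan_succ', Finset.sum_mul]
        refine Finset.sum_congr rfl fun p hp => ?_
        rw [Finset.HasAntidiagonal.mem_antidiagonal] at hp
        rw [hp]

lemma claim1 (k n : ℕ) : k * F k n
    = k^(n+1) + ∑ j ∈ Finset.range (n+1), catalan (j+1) * n.choose (2*j+2) * k^(n-1-2*j) := by
  rw [F, Finset.mul_sum, Finset.sum_range_succ']
  rw [Finset.sum_range_succ (fun j => catalan (j+1) * n.choose (2*j+2) * k^(n-1-2*j))]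
  rw [Nat.choose_eq_zero_of_lt (by omega : n < 2*n+2)]
  simp only [mul_zero, zero_mul, mul_one, add_zero, Nat.choose_zero_right, catalan_zero,
    Nat.sub_zero, one_mul, Nat.mul_zero]
  rw [← pow_succ']
  rw [add_comm (k^(n+1))]
  congr 1
  refine Finset.sum_congr rfl fun j hj => ?_
  rcases le_or_gt (2*j+2) n with h | h
  · obtain ⟨e, h1, h2⟩ : ∃ e, n-1-2*j = e+1 ∧ n-2*(j+1) = e := ⟨n-2*j-2, by omega, by omega⟩
    rw [h1, h2, pow_succ, show 2*(j+1) = 2*j+2 from by ring]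
    ring
  · rw [Nat.choose_eq_zero_of_lt (by omega : n < 2*(j+1)),
      Nat.choose_eq_zero_of_lt (by omega : n < 2*j+2)]
    ring

lemma Fext (k i M : ℕ) (h : i ≤ M) :
    F k i = ∑ a ∈ Finset.range (M+1), catalan a * i.choose (2*a) * k^(i-2*a) := by
  rw [F]
  refine Finset.sum_subset (by intro a ha; simp only [Finset.mem_range] at *; omega) ?_
  intro a ha ha'
  simp only [Finset.mem_range] at ha ha'
  rw [Nat.choose_eq_zero_of_lt (by omega : i < 2*a)]
  ring

lemma claim2 (k n : ℕ) : ∑ i ∈ Finset.range n, F k i * F k (n-1-i)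
    = ∑ m ∈ Finset.range (n+1), catalan (m+1) * (n.choose (2*m+1) * k^(n-1-2*m)) := by
  cases n with
  | zero => simp
  | succ N =>
    simp only [Nat.add_sub_cancel]
    calc ∑ i ∈ Finset.range (N+1), F k i * F k (N-i)
        = ∑ i ∈ Finset.range (N+1), ∑ a ∈ Finset.range (N+2), ∑ b ∈ Finset.range (N+2),
            (catalan a * i.choose (2*a) * k^(i-2*a)) *
            (catalan b * (N-i).choose (2*b) * k^(N-i-2*b)) := by
          refine Finset.sum_congr rfl fun i hi => ?_
          simp only [Finset.mem_range] at hi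
          rw [Fext k i (N+1) (by omega), Fext k (N-i) (N+1) (by omega), Finset.sum_mul_sum]
      _ = ∑ a ∈ Finset.range (N+2), ∑ b ∈ Finset.range (N+2), ∑ i ∈ Finset.range (N+1),
            (catalan a * i.choose (2*a) * k^(i-2*a)) *
            (catalan b * (N-i).choose (2*b) * k^(N-i-2*b)) := by
          rw [Finset.sum_comm]
          exact Finset.sum_congr rfl fun a _ => Finset.sum_comm
      _ = ∑ a ∈ Finset.range (N+2), ∑ b ∈ Finset.range (N+2),
            catalan a * catalan b * ((N+1).choose (2*(a+b)+1) * k^(N-2*(a+b))) := by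
          refine Finset.sum_congr rfl fun a _ => Finset.sum_congr rfl fun b _ => ?_
          have key : ∀ i ∈ Finset.range (N+1),
              (catalan a * i.choose (2*a) * k^(i-2*a)) *
              (catalan b * (N-i).choose (2*b) * k^(N-i-2*b))
              = catalan a * catalan b * (i.choose (2*a) * (N-i).choose (2*b) * k^(N-2*(a+b))) := by
            intro i hi
            simp only [Finset.mem_range] at hi
            rcases le_or_gt (2*a) i with h1 | h1
            · rcases le_or_gt (2*b) (N-i) with h2 | h2
              · rw [show N-2*(a+b) = (i-2*a) + (N-i-2*b) from by omega, pow_add]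
                ring
              · rw [Nat.choose_eq_zero_of_lt h2]; ring
            · rw [Nat.choose_eq_zero_of_lt h1]; ring
          rw [Finset.sum_congr rfl key]
          simp only [← Finset.mul_sum, ← Finset.sum_mul]
          rw [choose_conv (2*b) N (2*a), show 2*a+2*b+1 = 2*(a+b)+1 from by ring]
      _ = ∑ m ∈ Finset.range (N+2), catalan (m+1) * ((N+1).choose (2*m+1) * k^(N-2*m)) := by
          refine square_catalan (N+2) (fun m => (N+1).choose (2*m+1) * k^(N-2*m)) ?_
          intro m hm
          simp [Nat.choose_eq_zero_of_lt (by omega : N+1 < 2*m+1)]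

lemma F_rec (k n : ℕ) : F k (n+1) = k * F k n + ∑ i ∈ Finset.range n, F k i * F k (n-1-i) := by
  rw [claim1, claim2]
  rw [F, Finset.sum_range_succ']
  simp only [catalan_zero, Nat.choose_zero_right, mul_one, one_mul, Nat.mul_zero, Nat.sub_zero]
  have : ∀ j ∈ Finset.range (n+1), catalan (j+1) * (n+1).choose (2*(j+1)) * k^(n+1-2*(j+1))
      = catalan (j+1) * n.choose (2*j+2) * k^(n-1-2*j)
        + catalan (j+1) * (n.choose (2*j+1) * k^(n-1-2*j)) := by
    intro j _
    rw [show 2*(j+1) = (2*j+1)+1 from by ring, Nat.choose_succ_succ,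
      show (2*j+1)+1 = 2*j+2 from by ring,
      show n+1-(2*j+2) = n-1-2*j from by omega]
    ring
  rw [Finset.sum_congr rfl this, Finset.sum_add_distrib]
  omega

lemma motzkin_eq_F (k : ℕ) : ∀ n, coloredMotzkin k n = F k n := by
  intro n
  induction n using Nat.strong_induction_on with
  | _ n ih =>
    match n with
    | 0 => simp [coloredMotzkin, F]
    | m+1 =>
      rw [coloredMotzkin, F_rec, ih m (by omega)]
      congr 1
      rw [Fin.sum_univ_eq_sum_range (fun i => coloredMotzkin k i * coloredMotzkin k (m-1-i)) m]
      refine Finset.sum_congr rfl fun i hi => ?_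
      simp only [Finset.mem_range] at hi
      rw [ih i (by omega), ih (m-1-i) (by omega)]

/-- For all `n ≥ 0` and `k ≥ 1`,
`m_{n,k} = ∑_{j=0}^{⌊n/2⌋} C_j · (n choose 2j) · k^(n-2j)`. -/
theorem coloredMotzkin_eq_sum (n k : ℕ) (hk : 1 ≤ k) :
    coloredMotzkin k n =
      ∑ j ∈ Finset.range (n / 2 + 1), catalan j * n.choose (2 * j) * k ^ (n - 2 * j) := by
  rw [motzkin_eq_F k n, F]
  refine (Finset.sum_subset ?_ ?_).symm
  · intro j hj
    simp only [Finset.mem_range] at *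
    omega
  · intro j hj hj'
    simp only [Finset.mem_range] at hj hj'
    rw [Nat.choose_eq_zero_of_lt (by omega : n < 2*j)]
    ring
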